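/- Let S ⊆ ℤ be finite with |S| ≥ 3 and let s₀ ∈ S be an extreme point of S, i.e. s₀ = min S or s₀ = max S. Then every AP-free finite colouring of ℕ contains an almost-monochromatic positive homothetic copy of (S, s₀) lying in ℕ: there exist c ∈ ℝ and λ > 0 with c + λ·S ⊆ ℕ such that (c + λ·S, c + λ·s₀) is almost-monochromatic. -/

import Mathlib

/-- A colouring of `ℕ` is AP-free if no infinite arithmetic progression
`{a + n·t : n ∈ ℕ}` with `t ≥ 1` is monochromatic. -/
def APFreeN {k : ℕ} (φ : ℕ → Fin k) : Prop :=
  ¬ ∃ (a t : ℕ) (c : Fin k), 1 ≤ t ∧ ∀ n : ℕ, φ (a + n * t) = c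

/-- In an ultrafilter, one colour class of any finite colouring is large. -/
lemma ultra_exists_color {k : ℕ} (U : Ultrafilter ℕ) (f : ℕ → Fin k) :
    ∃ c, {m | f m = c} ∈ U := by
  by_contra h
  push_neg at h
  have h2 : ∀ c : Fin k, {m | f m = c}ᶜ ∈ U := fun c =>
    Ultrafilter.compl_mem_iff_notMem.2 (h c)
  have h3 : (⋂ c : Fin k, {m | f m = c}ᶜ) ∈ U := Filter.iInter_mem.2 h2
  have h4 : (⋂ c : Fin k, {m | f m = c}ᶜ) = ∅ := by
    ext m
    simp only [Set.mem_iInter, Set.mem_compl_iff, Set.mem_setOf_eq,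
      Set.mem_empty_iff_false, iff_false, not_forall, not_not]
    exact ⟨f m, rfl⟩
  rw [h4] at h3
  exact Filter.empty_notMem _ h3

/-- If `S ⊆ ℤ` is finite with `|S| ≥ 3` and `s₀ ∈ S` is an extreme
point of `S` (the minimum or the maximum), then every AP-free finite colouring of
`ℕ` contains an almost-monochromatic positive homothetic copy of `(S, s₀)` lying
in `ℕ`. -/
theorem am_homothet_extreme (S : Finset ℤ) (hcard : 3 ≤ S.card)
    (s₀ : ℤ) (hs₀ : s₀ ∈ S)
    (hext : (∀ x ∈ S, s₀ ≤ x) ∨ (∀ x ∈ S, x ≤ s₀))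
    (k : ℕ) (φ : ℕ → Fin k) (hAP : APFreeN φ) :
    ∃ (c l : ℝ) (F : ℤ → ℕ), 0 < l ∧ (∀ s ∈ S, (F s : ℝ) = c + l * (s : ℝ)) ∧
      (∃ col, ∀ s ∈ S, s ≠ s₀ → φ (F s) = col) ∧ ¬ ∃ col, ∀ s ∈ S, φ (F s) = col := by
  by_contra hgoal
  push_neg at hgoal
  obtain ⟨t₁, ht₁S, ht₁⟩ := Finset.exists_mem_ne (s := S) (by omega) s₀
  -- The key consequence of the negated goal: whenever the `S \ {s₀}` part of an
  -- integer homothetic copy is monochromatic, the `s₀` point has the same colour.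
  have star : ∀ (a x : ℕ) (β : ℤ), 0 < a → (∀ s ∈ S, β ≤ s) →
      ∀ col : Fin k, (∀ t ∈ S, t ≠ s₀ → φ (x + a * (t - β).toNat) = col) →
      φ (x + a * (s₀ - β).toNat) = col := by
    intro a x β ha hβ col hmono
    have haff : ∀ s ∈ S,
        (((fun s : ℤ => x + a * (s - β).toNat) s : ℕ) : ℝ)
          = ((x : ℝ) - a * β) + (a : ℝ) * (s : ℝ) := by
      intro s hs
      have h1 : ((s - β).toNat : ℤ) = s - β := Int.toNat_of_nonneg (by
        have := hβ s hs; omega)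
      have h2 : ((s - β).toNat : ℝ) = (s : ℝ) - (β : ℝ) := by exact_mod_cast h1
      push_cast
      rw [h2]
      ring
    obtain ⟨col', hcol'⟩ := hgoal ((x : ℝ) - a * β) a (fun s => x + a * (s - β).toNat)
      (by exact_mod_cast ha) haff ⟨col, hmono⟩
    have e1 : col' = col := by
      rw [← hcol' t₁ ht₁S, hmono t₁ ht₁S ht₁]
    rw [← e1]
    exact hcol' s₀ hs₀
  rcases hext with hmin | hmax
  · -- `s₀` is the minimum of `S`.
    set E := S.sup (fun s => (s - s₀).toNat) with hE
    set U := Filter.hyperfilter ℕ with hU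
    have hlim : ∀ n : ℕ, ∃ c, {m | φ (m + n) = c} ∈ U := fun n =>
      ultra_exists_color U (fun m => φ (m + n))
    choose ψ hψ using hlim
    obtain ⟨a, ha, b, c₀, hgal⟩ := Combinatorics.exists_mono_homothetic_copy
      (Finset.range (E + 1)) ψ
    have hblock : ∀ n ∈ Finset.range (E + 1), {m | φ (m + (a * n + b)) = c₀} ∈ U := by
      intro n hn
      have h1 := hψ (a * n + b)
      have h2 : ψ (a * n + b) = c₀ := by
        have := hgal n hn
        simpa [smul_eq_mul] using this
      rwa [h2] at h1
    have hM : (⋂ n ∈ Finset.range (E + 1), {m | φ (m + (a * n + b)) = c₀}) ∈ U :=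
      (Filter.biInter_finset_mem _).2 hblock
    set M := ⋂ n ∈ Finset.range (E + 1), {m | φ (m + (a * n + b)) = c₀} with hMdef
    have hMinf : M.Infinite := fun hfin => Set.Finite.notMem_hyperfilter hfin hM
    obtain ⟨r, hra, hrinf⟩ : ∃ r, r < a ∧ {m | m ∈ M ∧ (m + b) % a = r}.Infinite := by
      by_contra hcon
      push_neg at hcon
      apply hMinf
      have hsub : M ⊆ ⋃ r ∈ Set.Iio a, {m | m ∈ M ∧ (m + b) % a = r} := by
        intro m hm
        exact Set.mem_iUnion₂.2 ⟨(m + b) % a, Nat.mod_lt _ ha, hm, rfl⟩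
      exact Set.Finite.subset (Set.Finite.biUnion (Set.finite_Iio a)
        (fun r hr => (hcon r hr))) hsub
    have hEb : ∀ t ∈ S, (t - s₀).toNat ≤ E := fun t ht =>
      Finset.le_sup (f := fun s => (s - s₀).toNat) ht
    have key : ∀ m ∈ M, ∀ j, a * j ≤ m + b → φ (m + b - a * j) = c₀ := by
      intro m hm j
      induction j using Nat.strong_induction_on with
      | _ j IH =>
        intro hj
        rcases Nat.eq_zero_or_pos j with rfl | hjpos
        · have h0 : φ (m + (a * 0 + b)) = c₀ :=
            Set.mem_iInter₂.1 hm 0 (Finset.mem_range.2 (by omega))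
          simpa using h0
        · have hx := star a (m + b - a * j) s₀ ha hmin c₀ ?_
          · simpa using hx
          · intro t ht htne
            set d := (t - s₀).toNat with hd
            have hd1 : 1 ≤ d := by
              have := hmin t ht
              omega
            have hdE : d ≤ E := hEb t ht
            rcases le_or_gt d j with hle | hlt
            · have e1 : a * (j - d) + a * d = a * j := by
                rw [← Nat.mul_add]
                congr 1
                omega
              have e2 : m + b - a * j + a * d = m + b - a * (j - d) := by omega
              rw [e2]
              exact IH (j - d) (by omega) (by omega)
            · have e1 : a * (d - j) + a * j = a * d := by
                rw [← Nat.mul_add]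
                congr 1
                omega
              have hdE2 : a * d ≤ a * E := Nat.mul_le_mul_left a hdE
              have e2 : m + b - a * j + a * d = m + (a * (d - j) + b) := by omega
              rw [e2]
              exact Set.mem_iInter₂.1 hm (d - j) (Finset.mem_range.2 (by omega))
    apply hAP
    refine ⟨r, a, c₀, ha, fun n => ?_⟩
    obtain ⟨m, hmMr, hmgt⟩ := hrinf.exists_gt (r + n * a)
    obtain ⟨hmM, hmr⟩ := hmMr
    have hxy : r + n * a ≤ m + b := by omega
    obtain ⟨q, hqe⟩ : ∃ q, a * q + r = m + b := by
      refine ⟨(m + b) / a, ?_⟩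
      have h1 := Nat.div_add_mod (m + b) a
      omega
    have hcomm : n * a = a * n := Nat.mul_comm n a
    have h1 : a * n ≤ a * q := by omega
    have hqn : n ≤ q := Nat.le_of_mul_le_mul_left h1 ha
    have e4 : a * (q - n) + a * n = a * q := by
      rw [← Nat.mul_add]
      congr 1
      omega
    have e3 : a * (q - n) ≤ m + b := by omega
    have hkey := key m hmM (q - n) e3
    have e5 : m + b - a * (q - n) = r + n * a := by omega
    rwa [e5] at hkey
  · -- `s₀` is the maximum of `S`.
    have hSne : S.Nonempty := ⟨s₀, hs₀⟩
    set μ := S.min' hSne with hμdef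
    have hμle : ∀ s ∈ S, μ ≤ s := fun s hs => S.min'_le s hs
    have hμlt : μ < s₀ := by
      rcases eq_or_lt_of_le (hμle s₀ hs₀) with he | h
      · exfalso
        have h1 := hμle t₁ ht₁S
        have h2 := hmax t₁ ht₁S
        omega
      · exact h
    set E := S.sup (fun s => (s - μ).toNat) with hEdef
    set D := (s₀ - μ).toNat with hDdef
    have hD1 : 1 ≤ D := by omega
    have hDE : D ≤ E := Finset.le_sup (f := fun s => (s - μ).toNat) hs₀
    obtain ⟨a, ha, b, c₀, hgal⟩ := Combinatorics.exists_mono_homothetic_copy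
      (Finset.range (E + 1)) φ
    have hblock : ∀ n, n ≤ E → φ (b + a * n) = c₀ := by
      intro n hn
      have := hgal n (Finset.mem_range.2 (by omega))
      simpa [smul_eq_mul, Nat.add_comm] using this
    have key : ∀ j, φ (b + a * j) = c₀ := by
      intro j
      induction j using Nat.strong_induction_on with
      | _ j IH =>
        rcases le_or_gt j E with hle | hgt
        · exact hblock j hle
        · have hDj : a * D ≤ a * j := Nat.mul_le_mul_left a (by omega)
          have hx := star a (b + a * j - a * D) μ ha hμle c₀ ?_
          · have e2 : b + a * j - a * D + a * D = b + a * j := by omega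
            rw [← hDdef, e2] at hx
            exact hx
          · intro t ht htne
            set d := (t - μ).toNat with hddef
            have hdD : d < D := by
              have h1 := hmax t ht
              have h2 := hμle t ht
              omega
            have e1 : a * (j - D + d) + a * D = a * j + a * d := by
              rw [← Nat.mul_add, ← Nat.mul_add]
              congr 1
              omega
            have e2 : b + a * j - a * D + a * d = b + a * (j - D + d) := by omega
            rw [e2]
            exact IH (j - D + d) (by omega)
    apply hAP
    refine ⟨b, a, c₀, ha, fun n => ?_⟩
    have := key n
    rwa [Nat.mul_comm a n] at this
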